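/- Define g : ℝ → ℝ by g(r) = √r·cos(3r/4). Then for every r > 0, g''(r) = g'(r)/r + (−3/(4r²) − 9/16)·g(r); moreover g(2π/3) = 0 and g(2π) = 0. -/

import Mathlib

noncomputable def g1 (x : ℝ) : ℝ :=
  Real.cos (3 * x / 4) * (2 * Real.sqrt x)⁻¹ - 3 / 4 * Real.sin (3 * x / 4) * Real.sqrt x

lemma hlin (x : ℝ) : HasDerivAt (fun x : ℝ => 3 * x / 4) (3 / 4) x := by
  simpa using ((hasDerivAt_id x).const_mul (3:ℝ)).div_const 4

lemma hd1 {x : ℝ} (hx : 0 < x) :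
    HasDerivAt (fun x : ℝ => Real.sqrt x * Real.cos (3 * x / 4)) (g1 x) x := by
  have hs : HasDerivAt Real.sqrt (1 / (2 * Real.sqrt x)) x := Real.hasDerivAt_sqrt hx.ne'
  have hc : HasDerivAt (fun x : ℝ => Real.cos (3 * x / 4)) (-Real.sin (3 * x / 4) * (3 / 4)) x :=
    (hlin x).cos
  have := hs.mul hc
  convert this using 1
  all_goals try rfl
  unfold g1; field_simp; ring

lemma hd2 {x : ℝ} (hx : 0 < x) :
    HasDerivAt g1
      (g1 x / x + (-3 / (4 * x ^ 2) - 9 / 16) * (Real.sqrt x * Real.cos (3 * x / 4))) x := by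
  have hs : HasDerivAt Real.sqrt (1 / (2 * Real.sqrt x)) x := Real.hasDerivAt_sqrt hx.ne'
  have hsx : Real.sqrt x ≠ 0 := (Real.sqrt_pos.2 hx).ne'
  have hxx : Real.sqrt x * Real.sqrt x = x := Real.mul_self_sqrt hx.le
  have hc : HasDerivAt (fun x : ℝ => Real.cos (3 * x / 4)) (-Real.sin (3 * x / 4) * (3 / 4)) x :=
    (hlin x).cos
  have hsin : HasDerivAt (fun x : ℝ => Real.sin (3 * x / 4)) (Real.cos (3 * x / 4) * (3 / 4)) x :=
    (hlin x).sin
  have h2 : HasDerivAt (fun x : ℝ => 2 * Real.sqrt x) (2 * (1 / (2 * Real.sqrt x))) x :=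
    hs.const_mul 2
  have h2' : 2 * Real.sqrt x ≠ 0 := by positivity
  have hinv : HasDerivAt (fun x : ℝ => (2 * Real.sqrt x)⁻¹)
      (-(2 * (1 / (2 * Real.sqrt x))) / (2 * Real.sqrt x) ^ 2) x := h2.inv h2'
  have hD := (hc.mul hinv).sub (((hsin.const_mul (3/4 : ℝ)).mul hs))
  convert hD using 1
  all_goals try rfl
  unfold g1
  set s := Real.sqrt x with hsdef
  rw [show x = s * s from hxx.symm]
  field_simp
  ring

/-- The explicit radial solution of Example 4.6. The function
`g(r) = √r cos(3r/4)` satisfies `g'' = g'/r + (-3/(4r²) - 9/16) g` for `r > 0`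
and vanishes at `r = 2π/3` and `r = 2π`. -/
theorem statement10 :
    (∀ r : ℝ, 0 < r →
        deriv (deriv (fun x : ℝ => Real.sqrt x * Real.cos (3 * x / 4))) r
          = deriv (fun x : ℝ => Real.sqrt x * Real.cos (3 * x / 4)) r / r
            + (-3 / (4 * r ^ 2) - 9 / 16) * (Real.sqrt r * Real.cos (3 * r / 4))) ∧
    Real.sqrt (2 * Real.pi / 3) * Real.cos (3 * (2 * Real.pi / 3) / 4) = 0 ∧
    Real.sqrt (2 * Real.pi) * Real.cos (3 * (2 * Real.pi) / 4) = 0 := by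
  refine ⟨fun r hr => ?_, ?_, ?_⟩
  · have heq : deriv (fun x : ℝ => Real.sqrt x * Real.cos (3 * x / 4)) =ᶠ[nhds r] g1 := by
      filter_upwards [eventually_gt_nhds hr] with x hx
      exact (hd1 hx).deriv
    rw [heq.deriv_eq, (hd2 hr).deriv, (hd1 hr).deriv]
  · have : 3 * (2 * Real.pi / 3) / 4 = Real.pi / 2 := by ring
    rw [this, Real.cos_pi_div_two, mul_zero]
  · have : 3 * (2 * Real.pi) / 4 = Real.pi + Real.pi / 2 := by ring
    rw [this, Real.cos_add]
    simp
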